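/- There is no distributive law of the finite probability distributions monad over the coinductive delay monad: no natural transformation ζ : D_f ∘ D → D ∘ D_f satisfies the four distributive law axioms. -/

import Mathlib

/-- The coinductive delay monad: `D X` is the final coalgebra of `Y ↦ X ⊕ Y`.
Concretely, an element of `D X` either diverges (`none`), or is of the form
`step^n (now x)`, represented as `some (n, x)`. -/
def Delay (X : Type) : Type := Option (ℕ × X)

namespace Delay

/-- `now : X → D X`. -/
def now {X : Type} (x : X) : Delay X := some (0, x)

/-- `step : D X → D X`. -/
def step {X : Type} : Delay X → Delay X
  | none => none
  | some (n, x) => some (n + 1, x)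

/-- The divergent computation, `fix step`. -/
def diverge {X : Type} : Delay X := none

/-- Functorial action of `D`. -/
def map {X Y : Type} (f : X → Y) : Delay X → Delay Y
  | none => none
  | some (n, x) => some (n, f x)

/-- Monad multiplication `μ : D(D X) → D X`, satisfying `μ (now d) = d` and
`μ (step d) = step (μ d)`. -/
def mu {X : Type} : Delay (Delay X) → Delay X
  | none => none
  | some (_, none) => none
  | some (n, some (m, x)) => some (n + m, x)

end Delay

/-- The finite probability distributions monad with rational probabilities (the free
convex algebra monad): finitely supported functions into `ℚ≥0` summing to `1`. -/
def FinDist (X : Type) : Type :=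
  {w : X →₀ NNRat // w.sum (fun _ q => q) = 1}

namespace FinDist

/-- Unit: the point mass at `x`. -/
noncomputable def pure {X : Type} (x : X) : FinDist X :=
  ⟨Finsupp.single x 1, by simp⟩

/-- Functorial action: pushforward of distributions. -/
noncomputable def map {X Y : Type} (f : X → Y) (d : FinDist X) : FinDist Y :=
  ⟨Finsupp.mapDomain f d.1, by
    rw [Finsupp.sum_mapDomain_index (fun _ => rfl) (fun _ _ _ => rfl)]
    exact d.2⟩

/-- Multiplication: weighted average of distributions. -/
noncomputable def mu {X : Type} (D : FinDist (FinDist X)) : FinDist X :=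
  ⟨D.1.sum (fun d q => q • d.1), by
    classical
    rw [Finsupp.sum_sum_index (fun _ => rfl) (fun _ _ _ => rfl)]
    calc ((D.1.sum fun a b => (b • a.1).sum fun _ q => q) : NNRat)
        = D.1.sum fun _ b => b :=
          Finsupp.sum_congr fun d _ => by
            rw [Finsupp.sum_smul_index (fun _ => rfl), ← Finsupp.mul_sum, d.2, mul_one]
      _ = 1 := D.2⟩

end FinDist

section Infra

private lemma dmap_some {X Y : Type} (f : X → Y) (n : ℕ) (x : X) :
    Delay.map f (some (n, x)) = some (n, f x) := rfl

private lemma dmap_none {X Y : Type} (f : X → Y) :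
    Delay.map f (none : Delay X) = none := rfl

private lemma dmu_some {X : Type} (n m : ℕ) (x : X) :
    Delay.mu (some (n, some (m, x))) = some (n + m, x) := rfl

private noncomputable def mix2 {α : Type} (p q : NNRat) (h : p + q = 1) (d₁ d₂ : α) : FinDist α :=
  ⟨Finsupp.single d₁ p + Finsupp.single d₂ q, by
    rw [Finsupp.sum_add_index' (fun _ => rfl) (fun _ _ _ => rfl),
      Finsupp.sum_single_index rfl, Finsupp.sum_single_index rfl, h]⟩

private lemma mix2_map {α β : Type} (f : α → β) (p q : NNRat) (h : p + q = 1) (d₁ d₂ : α) :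
    FinDist.map f (mix2 p q h d₁ d₂) = mix2 p q h (f d₁) (f d₂) := by
  apply Subtype.ext
  show Finsupp.mapDomain f _ = _
  simp [mix2, Finsupp.mapDomain_add, Finsupp.mapDomain_single]

private lemma mix2_comm {α : Type} (p q : NNRat) (h : p + q = 1) (h' : q + p = 1) (d₁ d₂ : α) :
    mix2 p q h d₁ d₂ = mix2 q p h' d₂ d₁ := Subtype.ext (add_comm _ _)

private lemma mix2_same {α : Type} (p q : NNRat) (h : p + q = 1) (d : α) :
    mix2 p q h d d = FinDist.pure d := by
  apply Subtype.ext
  show Finsupp.single d p + Finsupp.single d q = Finsupp.single d 1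
  rw [← Finsupp.single_add, h]

private lemma mu_mix2 {α : Type} (p q : NNRat) (h : p + q = 1) (s₁ s₂ : FinDist α) :
    (FinDist.mu (mix2 p q h s₁ s₂)).1 = p • s₁.1 + q • s₂.1 := by
  show Finsupp.sum (Finsupp.single s₁ p + Finsupp.single s₂ q) (fun d q => q • d.1) = _
  rw [Finsupp.sum_add_index' (fun (a : FinDist α) => zero_smul NNRat a.1)
      (fun (a : FinDist α) b c => add_smul b c a.1),
    Finsupp.sum_single_index (zero_smul NNRat s₁.1),
    Finsupp.sum_single_index (zero_smul NNRat s₂.1)]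

private lemma bool_mass (v : FinDist Bool) : v.1 true + v.1 false = 1 := by
  have h := v.2
  classical
  rw [Finsupp.sum_fintype _ _ (fun _ => rfl)] at h
  rwa [Fintype.sum_bool] at h

private lemma bool_rep (v : FinDist Bool) :
    v.1 = Finsupp.single true (v.1 true) + Finsupp.single false (v.1 false) := by
  classical
  ext x
  cases x <;> simp [Finsupp.single_apply]

private lemma not_inj : Function.Injective not := fun x y hxy => by
  cases x <;> cases y <;> simp_all

private lemma half_of_double (x : NNRat) (h : x + x = 1) : x = 1/2 := by
  have h' : (x : ℚ) + x = 1 := by exact_mod_cast h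
  have h2 : (x : ℚ) = ((1/2 : NNRat) : ℚ) := by push_cast; linarith
  exact_mod_cast h2

end Infra

private lemma mu_half_mix {α : Type} (h2 : (1/2 : NNRat) + 1/2 = 1) (h4 : (1/4 : NNRat) + 3/4 = 1)
    (d₁ d₂ : α) :
    FinDist.mu (mix2 _ _ h2 (mix2 _ _ h2 d₁ d₂) (FinDist.pure d₂)) = mix2 _ _ h4 d₁ d₂ := by
  apply Subtype.ext
  rw [mu_mix2]
  show (1/2 : NNRat) • (Finsupp.single d₁ (1/2) + Finsupp.single d₂ (1/2))
      + (1/2 : NNRat) • (Finsupp.single d₂ 1)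
      = Finsupp.single d₁ (1/4) + Finsupp.single d₂ (3/4)
  rw [smul_add, Finsupp.smul_single, Finsupp.smul_single, Finsupp.smul_single,
    add_assoc, ← Finsupp.single_add]
  have m1 : (1/2 : NNRat) * (1/2) = 1/4 := by apply NNRat.coe_injective; push_cast; norm_num
  have m2 : (1/2 : NNRat) * 1 = 1/2 := mul_one _
  have m3 : (1/4 : NNRat) + 1/2 = 3/4 := by apply NNRat.coe_injective; push_cast; norm_num
  simp only [smul_eq_mul]
  rw [m1, m2, m3]

private lemma map_bool_mix2 {γ : Type} (v : FinDist Bool) (g : Bool → γ) :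
    FinDist.map g v = mix2 (v.1 true) (v.1 false) (bool_mass v) (g true) (g false) := by
  apply Subtype.ext
  show Finsupp.mapDomain g v.1 = _
  conv_lhs => rw [bool_rep v]
  rw [Finsupp.mapDomain_add, Finsupp.mapDomain_single, Finsupp.mapDomain_single]
  rfl

private lemma mu_mix2_apply_bool (p q : NNRat) (h : p + q = 1) (w₁ w₂ : FinDist Bool) :
    (FinDist.mu (mix2 p q h w₁ w₂)).1 true = p * w₁.1 true + q * w₂.1 true := by
  rw [mu_mix2, Finsupp.add_apply, Finsupp.smul_apply, Finsupp.smul_apply]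
  simp only [smul_eq_mul]

private lemma mix2_tf_apply (p q : NNRat) (h : p + q = 1) :
    (mix2 p q h true false).1 true = p := by
  classical
  simp [mix2, Finsupp.single_apply]

private lemma mix2_ft_apply (p q : NNRat) (h : p + q = 1) :
    (mix2 p q h false true).1 true = q := by
  classical
  simp [mix2, Finsupp.single_apply]

private lemma pure_true_apply : (FinDist.pure true).1 true = 1 := Finsupp.single_eq_same

private lemma pure_false_apply : (FinDist.pure false).1 true = 0 :=
  Finsupp.single_eq_of_ne (by simp)


/-- There is no distributive law of the finite (rational) probability distributions monad
(the free convex algebra monad) over the coinductive delay monad: no natural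
transformation `ζ : D_f ∘ D → D ∘ D_f` satisfies the two unit axioms and the two
multiplication axioms of a distributive law. -/
theorem no_distributive_law_findist_over_delay :
    ¬ ∃ ζ : ∀ X : Type, FinDist (Delay X) → Delay (FinDist X),
      -- naturality
      (∀ (X Y : Type) (f : X → Y) (s : FinDist (Delay X)),
          ζ Y (FinDist.map (Delay.map f) s)
            = Delay.map (FinDist.map f) (ζ X s)) ∧
      -- ζ ∘ η^{D_f} D = D η^{D_f}
      (∀ (X : Type) (d : Delay X),
          ζ X (FinDist.pure d) = Delay.map FinDist.pure d) ∧
      -- ζ ∘ D_f η^D = η^D D_f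
      (∀ (X : Type) (s : FinDist X),
          ζ X (FinDist.map Delay.now s) = Delay.now s) ∧
      -- ζ ∘ μ^{D_f} D = D μ^{D_f} ∘ ζ D_f ∘ D_f ζ
      (∀ (X : Type) (s : FinDist (FinDist (Delay X))),
          ζ X (FinDist.mu s)
            = Delay.map FinDist.mu (ζ (FinDist X) (FinDist.map (ζ X) s))) ∧
      -- ζ ∘ D_f μ^D = μ^D D_f ∘ D ζ ∘ ζ D
      (∀ (X : Type) (s : FinDist (Delay (Delay X))),
          ζ X (FinDist.map Delay.mu s)
            = Delay.mu (Delay.map (ζ X) (ζ (Delay X) s))) := by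
  rintro ⟨ζ, hnat, hu1, hu2, hmF, hmD⟩
  classical
  have h2 : (1/2 : NNRat) + 1/2 = 1 := by apply NNRat.coe_injective; push_cast; norm_num
  have h4 : (1/4 : NNRat) + 3/4 = 1 := by apply NNRat.coe_injective; push_cast; norm_num
  have h4' : (3/4 : NNRat) + 1/4 = 1 := by apply NNRat.coe_injective; push_cast; norm_num
  -- ζ on point masses
  have ZP : ∀ (Y : Type) (n : ℕ) (y : Y),
      ζ Y (FinDist.pure (some (n, y))) = some (n, FinDist.pure y) := by
    intro Y n y
    exact hu1 Y (some (n, y))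
  -- ζ on distributions over time-0 elements
  have Z0 : ∀ (Y : Type) (p q : NNRat) (h : p + q = 1) (y₁ y₂ : Y),
      ζ Y (mix2 p q h (some (0, y₁)) (some (0, y₂))) = some (0, mix2 p q h y₁ y₂) := by
    intro Y p q h y₁ y₂
    have h0 := hu2 Y (mix2 p q h y₁ y₂)
    rw [mix2_map] at h0
    exact h0
  -- the time of ζ on a two-atom equal-time distribution
  have TL : ∀ (p q : NNRat) (h : p + q = 1) (n : ℕ),
      ∃ w, ζ Bool (mix2 p q h (some (n, true)) (some (n, false))) = some (n, w) := by
    intro p q h n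
    have hnatc := hnat Bool Bool (fun _ => true) (mix2 p q h (some (n, true)) (some (n, false)))
    erw [mix2_map, dmap_some, mix2_same, ZP] at hnatc
    cases hζ : ζ Bool (mix2 p q h (some (n, true)) (some (n, false))) with
    | none => rw [hζ, dmap_none] at hnatc; exact absurd hnatc (by simp)
    | some mw =>
      obtain ⟨m, w⟩ := mw
      rw [hζ, dmap_some] at hnatc
      obtain ⟨hm, -⟩ := Prod.mk.injEq .. ▸ Option.some.inj hnatc
      subst hm
      exact ⟨w, rfl⟩
    -- swap symmetry at Bool: equal-time half-half distributions
  have SW : ∀ n : ℕ,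
      ζ Bool (mix2 (1/2) (1/2) h2 (some (n, true)) (some (n, false)))
        = some (n, mix2 (1/2) (1/2) h2 true false) := by
    intro n
    obtain ⟨w, hw⟩ := TL (1/2) (1/2) h2 n
    have hnatc := hnat Bool Bool not (mix2 (1/2) (1/2) h2 (some (n, true)) (some (n, false)))
    erw [mix2_map, dmap_some, dmap_some, hw] at hnatc
    rw [show (not true) = false from rfl, show (not false) = true from rfl] at hnatc
    erw [mix2_comm (1/2) (1/2) h2 h2, hw, dmap_some] at hnatc
    obtain ⟨-, hmap⟩ := Prod.mk.injEq .. ▸ Option.some.inj hnatc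
    -- hmap : w = FinDist.map not w
    have hval : w.1 true = w.1 false := by
      conv_lhs => rw [hmap]
      show (Finsupp.mapDomain not w.1) true = w.1 false
      have := Finsupp.mapDomain_apply not_inj w.1 false
      simpa using this
    have hmass := bool_mass w
    rw [← hval] at hmass
    have htrue : w.1 true = 1/2 := half_of_double _ hmass
    have hfalse : w.1 false = 1/2 := by rw [← hval, htrue]
    have hw2 : w = mix2 (1/2) (1/2) h2 true false := by
      apply Subtype.ext
      show w.1 = _
      rw [bool_rep w, htrue, hfalse]; rfl
    rw [hw, hw2]
  -- pushforward of swap symmetry to any type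
  have SWY : ∀ (Y : Type) (n : ℕ) (y₁ y₂ : Y),
      ζ Y (mix2 (1/2) (1/2) h2 (some (n, y₁)) (some (n, y₂)))
        = some (n, mix2 (1/2) (1/2) h2 y₁ y₂) := by
    intro Y n y₁ y₂
    have hnatc := hnat Bool Y (fun x => cond x y₁ y₂)
      (mix2 (1/2) (1/2) h2 (some (n, true)) (some (n, false)))
    erw [mix2_map, dmap_some, dmap_some, SW n, dmap_some, mix2_map] at hnatc
    exact hnatc
    -- quarter lemma at Bool (uses the convexity multiplication axiom)
  have QB : ζ Bool (mix2 (1/4) (3/4) h4 (some (1, true)) (some (1, false)))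
      = some (1, mix2 (1/4) (3/4) h4 true false) := by
    have hm := hmF Bool (mix2 (1/2) (1/2) h2
      (mix2 (1/2) (1/2) h2 (some (1, true)) (some (1, false)))
      (FinDist.pure (some (1, false))))
    erw [mu_half_mix h2 h4, mix2_map, SW 1, ZP, SWY] at hm
    rw [hm, dmap_some, mu_half_mix h2 h4]
  -- quarter lemma at any type
  have QY : ∀ (Y : Type) (y₁ y₂ : Y),
      ζ Y (mix2 (1/4) (3/4) h4 (some (1, y₁)) (some (1, y₂)))
        = some (1, mix2 (1/4) (3/4) h4 y₁ y₂) := by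
    intro Y y₁ y₂
    have hnatc := hnat Bool Y (fun x => cond x y₁ y₂)
      (mix2 (1/4) (3/4) h4 (some (1, true)) (some (1, false)))
    erw [mix2_map, dmap_some, dmap_some, QB, dmap_some, mix2_map] at hnatc
    exact hnatc
    -- structure of ζ on the distribution p·(1,true) ⊕ q·(0,false)
  have Astruct : ∀ (p q : NNRat) (h : p + q = 1),
      ∃ k v j z, ζ Bool (mix2 p q h (some (1, true)) (some (0, false))) = some (k, v) ∧
        ζ Bool (FinDist.map (fun x => cond x ((some (0, true)) : Delay Bool) (some (1, false))) v)
          = some (j, z) ∧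
        k + j = 1 := by
    intro p q h
    set fdel : Bool → Delay Bool := fun x => cond x (some (0, true)) (some (1, false)) with hfdel
    set t : FinDist (Delay Bool) := mix2 p q h (some (1, true)) (some (0, false)) with ht
    obtain ⟨w, hw⟩ := TL p q h 1
    have e1 : FinDist.map (Delay.map fdel) t
        = mix2 p q h (some (1, some (0, true))) (some (0, some (1, false))) :=
      mix2_map _ p q h _ _
    have e2 : FinDist.map Delay.mu
          (mix2 p q h ((some (1, some (0, true))) : Delay (Delay Bool)) (some (0, some (1, false))))
        = mix2 p q h (some (1, true)) (some (1, false)) :=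
      mix2_map _ p q h _ _
    have hnn : ζ (Delay Bool) (mix2 p q h ((some (1, some (0, true))) : Delay (Delay Bool))
          (some (0, some (1, false)))) = Delay.map (FinDist.map fdel) (ζ Bool t) := by
      erw [← e1, hnat]
    have hmd := hmD Bool (mix2 p q h ((some (1, some (0, true))) : Delay (Delay Bool))
      (some (0, some (1, false))))
    erw [e2, hw, hnn] at hmd
    cases hζt : ζ Bool t with
    | none =>
      rw [hζt, dmap_none] at hmd
      exact absurd hmd (by simp [Delay.map, Delay.mu])
    | some kv =>
      obtain ⟨k, v⟩ := kv
      rw [hζt, dmap_some, dmap_some] at hmd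
      cases hζ2 : ζ Bool (FinDist.map fdel v) with
      | none =>
        rw [hζ2] at hmd
        exact absurd hmd (by simp [Delay.mu])
      | some jz =>
        obtain ⟨j, z⟩ := jz
        rw [hζ2, dmu_some] at hmd
        obtain ⟨hkj, -⟩ := Prod.mk.injEq .. ▸ Option.some.inj hmd
        exact ⟨k, v, j, z, rfl, hζ2, hkj.symm⟩
    -- the key distribution: ½·(1,true) ⊕ ½·(0,false)
  obtain ⟨k, v, j, z, hA, hAj, hkj⟩ := Astruct (1/2) (1/2) h2
  -- ζ of the mirrored distribution, by naturality along `not`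
  have hA2 : ζ Bool (mix2 (1/2) (1/2) h2 (some (1, false)) (some (0, true)))
      = some (k, FinDist.map not v) := by
    have hx := hnat Bool Bool not (mix2 (1/2) (1/2) h2 (some (1, true)) (some (0, false)))
    erw [mix2_map, dmap_some, dmap_some, hA, dmap_some] at hx
    exact hx
  have hVmass : v.1 true + v.1 false = 1 := bool_mass v
  have hVmassQ : ((v.1 true : NNRat) : ℚ) + ((v.1 false : NNRat) : ℚ) = 1 := by
    exact_mod_cast hVmass
  by_cases hα : v.1 true = 1/2
  · -- symmetric case: the time equation forces k + k = 1 in ℕ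
    have hβ : v.1 false = 1/2 := by
      have hm := bool_mass v
      rw [hα] at hm
      exact add_left_cancel (hm.trans h2.symm)
    have hv : v = mix2 (1/2) (1/2) h2 true false := by
      apply Subtype.ext
      conv_lhs => rw [bool_rep v]
      rw [hα, hβ]; rfl
    have hfv : FinDist.map (fun x => cond x ((some (0, true)) : Delay Bool) (some (1, false))) v
        = mix2 (1/2) (1/2) h2 (some (1, false)) (some (0, true)) := by
      rw [hv, mix2_map]
      exact mix2_comm (1/2) (1/2) h2 h2 _ _
    erw [hfv, hA2] at hAj
    obtain ⟨hjk, -⟩ := Prod.mk.injEq .. ▸ Option.some.inj hAj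
    omega
  · -- asymmetric case
    have hk01 : k = 0 ∨ k = 1 := by omega
    -- Way A
    have hmA := hmF Bool (mix2 (1/4) (3/4) h4
      (mix2 (1/2) (1/2) h2 (some (1, true)) (some (0, false)))
      (mix2 (1/2) (1/2) h2 (some (1, false)) (some (0, true))))
    rw [mix2_map, hA, hA2] at hmA
    have hinner : ζ (FinDist Bool)
        (mix2 (1/4) (3/4) h4 (some (k, v)) (some (k, FinDist.map not v)))
        = some (k, mix2 (1/4) (3/4) h4 v (FinDist.map not v)) := by
      rcases hk01 with hk | hk
      · subst hk; exact Z0 (FinDist Bool) (1/4) (3/4) h4 v (FinDist.map not v)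
      · subst hk; exact QY (FinDist Bool) v (FinDist.map not v)
    rw [hinner, dmap_some] at hmA
    -- Way B
    obtain ⟨k₁, v₁, j₁, z₁, hA14, -, hkj14⟩ := Astruct (1/4) (3/4) h4
    obtain ⟨k₂, v₂, j₂, z₂, hA34, -, hkj34⟩ := Astruct (3/4) (1/4) h4'
    have hB1 : ζ Bool (mix2 (1/4) (3/4) h4 (some (1, true)) (some (0, true)))
        = some (k₁, FinDist.pure true) := by
      have hx := hnat Bool Bool (fun _ => true)
        (mix2 (1/4) (3/4) h4 (some (1, true)) (some (0, false)))
      erw [mix2_map, dmap_some, dmap_some, hA14, dmap_some] at hx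
      have hc : FinDist.map (fun (_ : Bool) => true) v₁ = FinDist.pure true := by
        rw [map_bool_mix2, mix2_same]
      rw [hc] at hx
      exact hx
    have hB2 : ζ Bool (mix2 (3/4) (1/4) h4' (some (1, false)) (some (0, false)))
        = some (k₂, FinDist.pure false) := by
      have hx := hnat Bool Bool (fun _ => false)
        (mix2 (3/4) (1/4) h4' (some (1, true)) (some (0, false)))
      erw [mix2_map, dmap_some, dmap_some, hA34, dmap_some] at hx
      have hc : FinDist.map (fun (_ : Bool) => false) v₂ = FinDist.pure false := by
        rw [map_bool_mix2, mix2_same]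
      rw [hc] at hx
      exact hx
    have hmB := hmF Bool (mix2 (1/2) (1/2) h2
      (mix2 (1/4) (3/4) h4 (some (1, true)) (some (0, true)))
      (mix2 (3/4) (1/4) h4' (some (1, false)) (some (0, false))))
    rw [mix2_map, hB1, hB2] at hmB
    -- the two mixtures have the same multiplication
    have hU : FinDist.mu (mix2 (1/4) (3/4) h4
          (mix2 (1/2) (1/2) h2 (some (1, true)) (some (0, false)))
          (mix2 (1/2) (1/2) h2 (some (1, false)) (some (0, true))))
        = FinDist.mu (mix2 (1/2) (1/2) h2
          (mix2 (1/4) (3/4) h4 (some (1, true)) (some (0, true)))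
          (mix2 (3/4) (1/4) h4' (some (1, false)) (some (0, false)))) := by
      apply Subtype.ext
      rw [mu_mix2, mu_mix2]
      show (1/4 : NNRat) • (Finsupp.single ((some (1, true)) : Delay Bool) (1/2)
            + Finsupp.single (some (0, false)) (1/2))
          + (3/4 : NNRat) • (Finsupp.single ((some (1, false)) : Delay Bool) (1/2)
            + Finsupp.single (some (0, true)) (1/2))
        = (1/2 : NNRat) • (Finsupp.single ((some (1, true)) : Delay Bool) (1/4)
            + Finsupp.single (some (0, true)) (3/4))
          + (1/2 : NNRat) • (Finsupp.single ((some (1, false)) : Delay Bool) (3/4)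
            + Finsupp.single (some (0, false)) (1/4))
      simp only [smul_add, Finsupp.smul_single, smul_eq_mul]
      have e1 : (1/4 : NNRat) * (1/2) = 1/8 := by apply NNRat.coe_injective; push_cast; norm_num
      have e2 : (3/4 : NNRat) * (1/2) = 3/8 := by apply NNRat.coe_injective; push_cast; norm_num
      have e3 : (1/2 : NNRat) * (1/4) = 1/8 := by apply NNRat.coe_injective; push_cast; norm_num
      have e4 : (1/2 : NNRat) * (3/4) = 3/8 := by apply NNRat.coe_injective; push_cast; norm_num
      rw [e1, e2, e3, e4]
      abel
    erw [← hU] at hmB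
    -- combine the two evaluations
    have hk101 : k₁ = 0 ∨ k₁ = 1 := by omega
    have hk201 : k₂ = 0 ∨ k₂ = 1 := by omega
    have hWA : (FinDist.mu (mix2 (1/4) (3/4) h4 v (FinDist.map not v))).1 true
        = 1/4 * v.1 true + 3/4 * v.1 false := by
      rw [mu_mix2_apply_bool, map_bool_mix2 v not]
      simp only [Bool.not_true, Bool.not_false]
      rw [mix2_ft_apply]
    have finish : ∀ c : NNRat,
        (1/4 : NNRat) * v.1 true + 3/4 * v.1 false = c →
        (c = 1/2 ∨ c = v.1 true ∨ c = v.1 false) → False := by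
      intro c hc hcase
      apply hα
      apply NNRat.coe_injective
      push_cast
      have hcq := congrArg (fun x : NNRat => (x : ℚ)) hc
      push_cast at hcq
      rcases hcase with h | h | h <;>
        (rw [h] at hcq; push_cast at hcq; linarith)
    rcases hk101 with hk1 | hk1 <;> rcases hk201 with hk2 | hk2 <;> subst hk1 <;> subst hk2
    · -- (k₁, k₂) = (0, 0)
      rw [Z0 (FinDist Bool) (1/2) (1/2) h2 (FinDist.pure true) (FinDist.pure false),
        dmap_some] at hmB
      have heq := hmA.symm.trans hmB
      obtain ⟨-, hsnd⟩ := Prod.mk.injEq .. ▸ Option.some.inj heq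
      have hval : (FinDist.mu (mix2 (1/4) (3/4) h4 v (FinDist.map not v))).1 true
          = (FinDist.mu (mix2 (1/2) (1/2) h2 (FinDist.pure true) (FinDist.pure false))).1 true :=
        congrArg (fun u : FinDist Bool => u.1 true) hsnd
      rw [hWA, mu_mix2_apply_bool, pure_true_apply, pure_false_apply,
        mul_one, mul_zero, add_zero] at hval
      exact finish _ hval (Or.inl rfl)
    · -- (k₁, k₂) = (0, 1)
      erw [mix2_comm (1/2) (1/2) h2 h2 ((some (0, FinDist.pure true)) : Delay (FinDist Bool))
        (some (1, FinDist.pure false))] at hmB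
      have hgt : ζ (FinDist Bool) (mix2 (1/2) (1/2) h2 (some (1, FinDist.pure false))
          (some (0, FinDist.pure true)))
          = some (k, FinDist.map (fun x => cond x (FinDist.pure false) (FinDist.pure true)) v) := by
        have hx := hnat Bool (FinDist Bool) (fun x => cond x (FinDist.pure false) (FinDist.pure true))
          (mix2 (1/2) (1/2) h2 (some (1, true)) (some (0, false)))
        erw [mix2_map, dmap_some, dmap_some, hA, dmap_some] at hx
        exact hx
      erw [hgt, dmap_some] at hmB
      have heq := hmA.symm.trans hmB
      obtain ⟨-, hsnd⟩ := Prod.mk.injEq .. ▸ Option.some.inj heq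
      have hval : (FinDist.mu (mix2 (1/4) (3/4) h4 v (FinDist.map not v))).1 true
          = (FinDist.mu (FinDist.map
              (fun x => cond x (FinDist.pure false) (FinDist.pure true)) v)).1 true :=
        congrArg (fun u : FinDist Bool => u.1 true) hsnd
      rw [hWA, map_bool_mix2 v (fun x => cond x (FinDist.pure false) (FinDist.pure true)),
        mu_mix2_apply_bool] at hval
      simp only [Bool.cond_true, Bool.cond_false, pure_true_apply, pure_false_apply,
        mul_zero, mul_one, zero_add] at hval
      exact finish _ hval (Or.inr (Or.inr rfl))
    · -- (k₁, k₂) = (1, 0)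
      have hgt : ζ (FinDist Bool) (mix2 (1/2) (1/2) h2 (some (1, FinDist.pure true))
          (some (0, FinDist.pure false)))
          = some (k, FinDist.map (fun x => cond x (FinDist.pure true) (FinDist.pure false)) v) := by
        have hx := hnat Bool (FinDist Bool) (fun x => cond x (FinDist.pure true) (FinDist.pure false))
          (mix2 (1/2) (1/2) h2 (some (1, true)) (some (0, false)))
        erw [mix2_map, dmap_some, dmap_some, hA, dmap_some] at hx
        exact hx
      rw [hgt, dmap_some] at hmB
      have heq := hmA.symm.trans hmB
      obtain ⟨-, hsnd⟩ := Prod.mk.injEq .. ▸ Option.some.inj heq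
      have hval : (FinDist.mu (mix2 (1/4) (3/4) h4 v (FinDist.map not v))).1 true
          = (FinDist.mu (FinDist.map
              (fun x => cond x (FinDist.pure true) (FinDist.pure false)) v)).1 true :=
        congrArg (fun u : FinDist Bool => u.1 true) hsnd
      rw [hWA, map_bool_mix2 v (fun x => cond x (FinDist.pure true) (FinDist.pure false)),
        mu_mix2_apply_bool] at hval
      simp only [Bool.cond_true, Bool.cond_false, pure_true_apply, pure_false_apply,
        mul_zero, mul_one, add_zero] at hval
      exact finish _ hval (Or.inr (Or.inl rfl))
    · -- (k₁, k₂) = (1, 1)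
      rw [SWY (FinDist Bool) 1 (FinDist.pure true) (FinDist.pure false), dmap_some] at hmB
      have heq := hmA.symm.trans hmB
      obtain ⟨-, hsnd⟩ := Prod.mk.injEq .. ▸ Option.some.inj heq
      have hval : (FinDist.mu (mix2 (1/4) (3/4) h4 v (FinDist.map not v))).1 true
          = (FinDist.mu (mix2 (1/2) (1/2) h2 (FinDist.pure true) (FinDist.pure false))).1 true :=
        congrArg (fun u : FinDist Bool => u.1 true) hsnd
      rw [hWA, mu_mix2_apply_bool, pure_true_apply, pure_false_apply,
        mul_one, mul_zero, add_zero] at hval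
      exact finish _ hval (Or.inl rfl)
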